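/- For all nonnegative integers m and n, the sum over k from 0 to floor(n/2) of [m+k choose k]_{q^2} * [m+1 choose n-2k]_q * q^{C(n-2k, 2)} equals [m+n choose n]_q, as an identity of polynomials (or rational functions) in q. -/

import Mathlib

open Finset

/-- The Gaussian (q-)binomial coefficient `[a choose b]_q`, defined as
`∏_{i=1}^{b} (1 - q^(a-i+1)) / (1 - q^i)` (which is `0` when `b > a`). -/
noncomputable def qbinom (q : RatFunc ℚ) (a b : ℕ) : RatFunc ℚ :=
  ∏ i ∈ Finset.range b, (1 - q ^ ((a : ℤ) - i)) / (1 - q ^ ((i : ℤ) + 1))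

namespace QSun

lemma one_sub_X_pow_ne (n : ℕ) (h : 1 ≤ n) : (1 : RatFunc ℚ) - RatFunc.X ^ n ≠ 0 := by
  intro hx
  have hx' : (RatFunc.X : RatFunc ℚ) ^ n = 1 := by linear_combination -hx
  rw [← RatFunc.algebraMap_X (K := ℚ), ← map_pow,
    ← map_one (algebraMap (Polynomial ℚ) (RatFunc ℚ))] at hx'
  have h2 : (Polynomial.X : Polynomial ℚ) ^ n = 1 := RatFunc.algebraMap_injective ℚ hx'
  have := congrArg Polynomial.natDegree h2
  simp [Polynomial.natDegree_X_pow] at this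
  omega

lemma one_sub_X_zpow_ne (z : ℤ) (h : 1 ≤ z) : (1 : RatFunc ℚ) - RatFunc.X ^ z ≠ 0 := by
  have hz : z = ((z.toNat : ℕ) : ℤ) := by omega
  rw [hz, zpow_natCast]
  exact one_sub_X_pow_ne _ (by omega)

lemma hden_X : ∀ i : ℕ, 1 ≤ i → (1 : RatFunc ℚ) - RatFunc.X ^ (i:ℤ) ≠ 0 := by
  intro i hi; exact one_sub_X_zpow_ne _ (by omega)

lemma hden_X2 : ∀ i : ℕ, 1 ≤ i → (1 : RatFunc ℚ) - (RatFunc.X ^ 2) ^ (i:ℤ) ≠ 0 := by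
  intro i hi
  have : ((RatFunc.X : RatFunc ℚ) ^ 2) ^ (i:ℤ) = RatFunc.X ^ ((2*i : ℕ) : ℤ) := by
    rw [← zpow_natCast (RatFunc.X : RatFunc ℚ) 2, ← zpow_mul]
    congr 1
  rw [this]
  exact one_sub_X_zpow_ne _ (by omega)

lemma qbinom_zero (q : RatFunc ℚ) (a : ℕ) : qbinom q a 0 = 1 := by simp [qbinom]

lemma qbinom_succ_right (q : RatFunc ℚ) (a b : ℕ) :
    qbinom q a (b+1) = (1 - q ^ ((a:ℤ) - b)) / (1 - q ^ ((b:ℤ)+1)) * qbinom q a b := by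
  rw [qbinom, Finset.prod_range_succ, mul_comm]; rfl

lemma qbinom_frac (q : RatFunc ℚ) (a b : ℕ) :
    qbinom q a b
      = (∏ i ∈ range b, (1 - q ^ ((a:ℤ) - i))) / (∏ i ∈ range b, (1 - q ^ ((i:ℤ)+1))) := by
  rw [qbinom, Finset.prod_div_distrib]

lemma qbinom_succ_succ (q : RatFunc ℚ) (a b : ℕ) :
    qbinom q (a+1) (b+1) = (1 - q ^ ((a:ℤ)+1)) / (1 - q ^ ((b:ℤ)+1)) * qbinom q a b := by
  rw [qbinom_frac, qbinom_frac, Finset.prod_range_succ', Finset.prod_range_succ]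
  have h1 : ∀ i : ℕ, (1 : RatFunc ℚ) - q ^ (((a+1:ℕ):ℤ) - ((i+1:ℕ):ℤ)) = 1 - q ^ ((a:ℤ) - i) := by
    intro i
    have : ((a+1:ℕ):ℤ) - ((i+1:ℕ):ℤ) = (a:ℤ) - i := by push_cast; ring
    rw [this]
  rw [Finset.prod_congr rfl (fun i _ => h1 i)]
  have h0 : ((a+1:ℕ):ℤ) - ((0:ℕ):ℤ) = (a:ℤ)+1 := by push_cast; ring
  rw [h0]
  field_simp

lemma qbinom_pascal (q : RatFunc ℚ) (hq : q ≠ 0) (a b : ℕ) (hb : 1 - q ^ ((b:ℤ)+1) ≠ 0) :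
    qbinom q (a+1) (b+1) = qbinom q a b + q ^ ((b:ℤ)+1) * qbinom q a (b+1) := by
  rw [qbinom_succ_succ, qbinom_succ_right]
  have key : (1 - q ^ ((a:ℤ)+1)) / (1 - q ^ ((b:ℤ)+1))
      = 1 + q ^ ((b:ℤ)+1) * ((1 - q ^ ((a:ℤ) - b)) / (1 - q ^ ((b:ℤ)+1))) := by
    field_simp
    have : q ^ ((b:ℤ)+1) * q ^ ((a:ℤ) - b) = q ^ ((a:ℤ)+1) := by
      rw [← zpow_add₀ hq]; congr 1; ring
    linear_combination this
  calc (1 - q ^ ((a:ℤ)+1)) / (1 - q ^ ((b:ℤ)+1)) * qbinom q a b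
      = (1 + q ^ ((b:ℤ)+1) * ((1 - q ^ ((a:ℤ) - b)) / (1 - q ^ ((b:ℤ)+1)))) * qbinom q a b := by
        rw [key]
    _ = qbinom q a b + q ^ ((b:ℤ)+1) * ((1 - q ^ ((a:ℤ) - b)) / (1 - q ^ ((b:ℤ)+1)) * qbinom q a b) := by
        ring

lemma qbinom_self (q : RatFunc ℚ) (h : ∀ i : ℕ, 1 ≤ i → 1 - q ^ (i:ℤ) ≠ 0) (n : ℕ) :
    qbinom q n n = 1 := by
  induction n with
  | zero => simp [qbinom]
  | succ n ih =>
      rw [qbinom_succ_succ, ih, mul_one]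
      have : ((n:ℤ)+1) = ((n+1 : ℕ) : ℤ) := by push_cast; ring
      rw [this, div_self (h (n+1) (by omega))]

lemma qbinom_eq_zero (q : RatFunc ℚ) (a b : ℕ) (h : a < b) : qbinom q a b = 0 := by
  rw [qbinom]
  apply Finset.prod_eq_zero (Finset.mem_range.mpr h)
  rw [sub_self (a:ℤ), zpow_zero, sub_self, zero_div]

/-- `T m k = [m+k choose k]_{q^2}`, extended by `0` to negative `k`. -/
noncomputable def Tt (m : ℕ) (k : ℤ) : RatFunc ℚ :=
  if 0 ≤ k then qbinom (RatFunc.X ^ 2) (m + k.toNat) k.toNat else 0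

/-- `G m j = [m+1 choose j]_q q^(C(j,2))`, extended by `0` to negative `j`. -/
noncomputable def Gg (m : ℕ) (j : ℤ) : RatFunc ℚ :=
  if 0 ≤ j then qbinom RatFunc.X (m + 1) j.toNat * RatFunc.X ^ (j.toNat.choose 2) else 0

noncomputable def S (m n : ℕ) : RatFunc ℚ :=
  ∑ k ∈ range (n / 2 + 1), Tt m k * Gg m ((n:ℤ) - 2 * k)

lemma Tt_nat (m k : ℕ) : Tt m (k : ℤ) = qbinom (RatFunc.X ^ 2) (m + k) k := by
  simp [Tt]

lemma Gg_nat (m j : ℕ) :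
    Gg m (j : ℤ) = qbinom RatFunc.X (m + 1) j * RatFunc.X ^ (j.choose 2) := by
  simp [Gg]

lemma Tt_neg (m : ℕ) (k : ℤ) (h : k < 0) : Tt m k = 0 := by
  simp [Tt, not_le.mpr h]

lemma Gg_neg (m : ℕ) (j : ℤ) (h : j < 0) : Gg m j = 0 := by
  simp [Gg, not_le.mpr h]

/-- Pascal-type recurrence for `Tt`. -/
lemma Tt_rec (m : ℕ) (k : ℤ) (hk : 0 ≤ k) :
    Tt (m+1) k - Tt (m+1) (k-1) = RatFunc.X ^ (2*k) * Tt m k := by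
  lift k to ℕ using hk
  cases k with
  | zero =>
      rw [show ((0:ℕ):ℤ) - 1 = -1 by norm_num, Tt_neg m.succ (-1) (by norm_num)]
      simp [Tt, qbinom_zero]
  | succ k =>
      have h1 : ((k+1:ℕ):ℤ) - 1 = (k:ℤ) := by push_cast; ring
      rw [h1, Tt_nat, Tt_nat, Tt_nat]
      have hX2 : ((RatFunc.X : RatFunc ℚ) ^ 2) ^ ((k:ℤ)+1) = RatFunc.X ^ (2*((k+1:ℕ):ℤ)) := by
        rw [← zpow_natCast (RatFunc.X : RatFunc ℚ) 2, ← zpow_mul]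
        congr 1
      have hb : (1 : RatFunc ℚ) - (RatFunc.X ^ 2) ^ ((k:ℤ)+1) ≠ 0 := by
        have h2 : ((k:ℤ)+1) = ((k+1:ℕ):ℤ) := by push_cast; ring
        rw [h2]; exact hden_X2 (k+1) (by omega)
      have hp := qbinom_pascal (RatFunc.X ^ 2) (pow_ne_zero 2 RatFunc.X_ne_zero) (m + 1 + k) k hb
      have e1 : m + 1 + (k + 1) = m + 1 + k + 1 := by omega
      have e2 : m + (k + 1) = m + 1 + k := by omega
      rw [e1, e2, ← hX2]
      linear_combination hp

lemma qbinom_one_right (q : RatFunc ℚ) (a : ℕ) :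
    qbinom q a 1 = (1 - q ^ (a:ℤ)) / (1 - q ^ (1:ℤ)) := by
  rw [qbinom, Finset.prod_range_one]
  norm_num

/-- Pascal-type recurrence for `Gg`. -/
lemma Gg_rec (m : ℕ) (j : ℤ) (hj : 0 ≤ j) :
    Gg (m+1) j - Gg (m+1) (j-1)
      = RatFunc.X ^ j * Gg m j - RatFunc.X ^ (j-2) * Gg m (j-2) := by
  lift j to ℕ using hj
  match j with
  | 0 =>
      rw [show ((0:ℕ):ℤ)-1 = -1 by norm_num, show ((0:ℕ):ℤ)-2 = -2 by norm_num,
        Gg_neg _ (-1) (by norm_num), Gg_neg _ (-2) (by norm_num)]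
      simp [Gg, qbinom_zero]
  | 1 =>
      rw [show ((1:ℕ):ℤ)-1 = ((0:ℕ):ℤ) by norm_num, show ((1:ℕ):ℤ)-2 = -1 by norm_num,
        Gg_neg _ (-1) (by norm_num), Gg_nat, Gg_nat, Gg_nat]
      rw [qbinom_one_right, qbinom_one_right, qbinom_zero]
      have e1 : ((1:ℕ):ℤ) = (1:ℤ) := by norm_num
      rw [e1, zpow_one, zpow_natCast, zpow_natCast]
      simp only [Nat.choose, mul_zero, pow_zero, mul_one]
      have hd : (1 : RatFunc ℚ) - RatFunc.X ≠ 0 := by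
        have := one_sub_X_pow_ne 1 le_rfl; simpa using this
      field_simp
      ring
  | (j+2) =>
      have e1 : ((j+2:ℕ):ℤ) - 1 = ((j+1:ℕ):ℤ) := by push_cast; ring
      have e2 : ((j+2:ℕ):ℤ) - 2 = ((j:ℕ):ℤ) := by push_cast; ring
      rw [e1, e2, Gg_nat, Gg_nat, Gg_nat, Gg_nat, zpow_natCast, zpow_natCast]
      have hb1 : (1 : RatFunc ℚ) - RatFunc.X ^ ((j:ℤ)+1) ≠ 0 := by
        have h2 : ((j:ℤ)+1) = ((j+1:ℕ):ℤ) := by push_cast; ring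
        rw [h2]; exact hden_X (j+1) (by omega)
      have hb2 : (1 : RatFunc ℚ) - RatFunc.X ^ (((j+1:ℕ)):ℤ)+  0 ≠ 0 := by
        simpa using hden_X (j+1) (by omega)
      have hb2' : (1 : RatFunc ℚ) - RatFunc.X ^ (((j+1):ℤ)+1) ≠ 0 := by
        have h2 : ((j+1):ℤ)+1 = ((j+2:ℕ):ℤ) := by push_cast; ring
        rw [h2]; exact hden_X (j+2) (by omega)
      have p1 := qbinom_pascal RatFunc.X RatFunc.X_ne_zero (m+1) (j+1) (by exact_mod_cast hb2')
      have p2 := qbinom_pascal RatFunc.X RatFunc.X_ne_zero (m+1) j hb1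
      have z1 : (RatFunc.X : RatFunc ℚ) ^ (((j+1:ℕ):ℤ)+1) = RatFunc.X ^ (j+2) := by
        rw [show ((j+1:ℕ):ℤ)+1 = ((j+2:ℕ):ℤ) by push_cast; ring, zpow_natCast]
      have z2 : (RatFunc.X : RatFunc ℚ) ^ ((j:ℤ)+1) = RatFunc.X ^ (j+1) := by
        rw [show ((j:ℕ):ℤ)+1 = ((j+1:ℕ):ℤ) by push_cast; ring, zpow_natCast]
      rw [z1] at p1
      rw [z2] at p2
      rw [show m+1+1 = m+2 from rfl] at p1 p2
      rw [p1, p2]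
      have c2 : (j+2).choose 2 = (j+1).choose 2 + (j+1) := by
        rw [Nat.choose_succ_succ (j+1) 1, Nat.choose_one_right]; ring
      have c1 : (j+1).choose 2 = j.choose 2 + j := by
        rw [Nat.choose_succ_succ j 1, Nat.choose_one_right]; ring
      rw [c2, c1]
      ring

lemma S_zero_right (m : ℕ) : S m 0 = 1 := by
  simp [S, Tt, Gg, qbinom_zero]

lemma S_zero_left (n : ℕ) : S 0 n = 1 := by
  rw [S, Finset.sum_eq_single_of_mem (n/2) (Finset.mem_range.mpr (by omega))]
  · have ht : Tt 0 ((n/2 : ℕ) : ℤ) = 1 := by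
      rw [Tt_nat, Nat.zero_add]
      exact qbinom_self _ hden_X2 _
    have e : ((n:ℤ) - 2*((n/2 : ℕ):ℤ)) = ((n % 2 : ℕ) : ℤ) := by omega
    rw [ht, e, one_mul]
    rcases Nat.mod_two_eq_zero_or_one n with h | h <;> rw [h]
    · rw [show (((0:ℕ)):ℤ) = ((0:ℕ):ℤ) from rfl, Gg_nat]
      simp [qbinom_zero]
    · rw [show (((1:ℕ)):ℤ) = ((1:ℕ):ℤ) from rfl, Gg_nat]
      rw [show (0:ℕ)+1 = 1 from rfl, qbinom_self _ hden_X 1]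
      simp
  · intro k hk hne
    have hk' : k < n/2 := by
      have := Finset.mem_range.mp hk; omega
    have h0 : (0:ℤ) ≤ (n:ℤ) - 2*k := by omega
    have h2 : 0 + 1 < ((n:ℤ) - 2*(k:ℤ)).toNat := by omega
    rw [Gg, if_pos h0, qbinom_eq_zero _ _ _ h2, zero_mul, mul_zero]

lemma S_prev (m n : ℕ) :
    S m n = ∑ k ∈ range ((n+1)/2 + 1), Tt m k * Gg m ((n:ℤ) - 2*k) := by
  rcases Nat.even_or_odd n with h | h
  · obtain ⟨t, rfl⟩ := h
    rw [S, show (t+t+1)/2 = (t+t)/2 by omega]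
  · obtain ⟨t, rfl⟩ := h
    rw [S, show (2*t+1)/2 + 1 = t+1 by omega, show (2*t+1+1)/2 + 1 = (t+1)+1 by omega]
    conv_rhs => rw [Finset.sum_range_succ]
    have hneg : ((2*t+1:ℕ):ℤ) - 2*((t+1 : ℕ):ℤ) < 0 := by push_cast; omega
    rw [Gg_neg _ _ hneg, mul_zero, add_zero]

lemma sum_shift (m mm n : ℕ) :
    ∑ k ∈ range ((n+1)/2 + 1),
        Tt mm k * (RatFunc.X ^ (((n+1:ℕ):ℤ) - 2*k - 2) * Gg m (((n+1:ℕ):ℤ) - 2*k - 2))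
      = ∑ k ∈ range ((n+1)/2 + 1),
        Tt mm ((k:ℤ) - 1) * (RatFunc.X ^ (((n+1:ℕ):ℤ) - 2*k) * Gg m (((n+1:ℕ):ℤ) - 2*k)) := by
  rw [Finset.sum_range_succ, Finset.sum_range_succ']
  have hlast : Gg m (((n+1:ℕ):ℤ) - 2*(((n+1)/2 : ℕ):ℤ) - 2) = 0 := by
    apply Gg_neg
    omega
  have hfirst : Tt mm (((0:ℕ):ℤ) - 1) = 0 := by
    apply Tt_neg; norm_num
  simp only [hlast, hfirst, mul_zero, zero_mul, add_zero, zero_add]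
  apply Finset.sum_congr rfl
  intro k hk
  have e1 : ((k+1:ℕ):ℤ) - 1 = (k:ℤ) := by push_cast; ring
  have e2 : ((n+1:ℕ):ℤ) - 2*((k+1:ℕ):ℤ) = ((n+1:ℕ):ℤ) - 2*k - 2 := by push_cast; ring
  rw [e1, e2]

lemma S_step (m n : ℕ) :
    S (m+1) (n+1) = S (m+1) n + RatFunc.X ^ (n+1) * S m (n+1) := by
  have key : S (m+1) (n+1) - S (m+1) n = RatFunc.X ^ (n+1) * S m (n+1) := by
    have h1 : S (m+1) (n+1) - S (m+1) n
        = ∑ k ∈ range ((n+1)/2 + 1), Tt (m+1) k *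
            (Gg (m+1) (((n+1:ℕ):ℤ) - 2*k) - Gg (m+1) ((((n+1:ℕ):ℤ) - 2*k) - 1)) := by
      rw [S, S_prev, ← Finset.sum_sub_distrib]
      apply Finset.sum_congr rfl
      intro k hk
      have e : (((n+1:ℕ):ℤ) - 2*k) - 1 = (n:ℤ) - 2*k := by push_cast; ring
      rw [e, mul_sub]
    have h2 : S (m+1) (n+1) - S (m+1) n
        = ∑ k ∈ range ((n+1)/2 + 1),
            (Tt (m+1) k * (RatFunc.X ^ (((n+1:ℕ):ℤ) - 2*k) * Gg m (((n+1:ℕ):ℤ) - 2*k))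
             - Tt (m+1) k * (RatFunc.X ^ (((n+1:ℕ):ℤ) - 2*k - 2) * Gg m (((n+1:ℕ):ℤ) - 2*k - 2))) := by
      rw [h1]
      apply Finset.sum_congr rfl
      intro k hk
      have hj : (0:ℤ) ≤ ((n+1:ℕ):ℤ) - 2*k := by
        have := Finset.mem_range.mp hk; push_cast; omega
      rw [Gg_rec m (((n+1:ℕ):ℤ) - 2*k) hj]
      ring
    have h3 : S (m+1) (n+1) - S (m+1) n
        = ∑ k ∈ range ((n+1)/2 + 1),
            (Tt (m+1) k - Tt (m+1) ((k:ℤ) - 1)) *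
              (RatFunc.X ^ (((n+1:ℕ):ℤ) - 2*k) * Gg m (((n+1:ℕ):ℤ) - 2*k)) := by
      rw [h2, Finset.sum_sub_distrib, sum_shift, ← Finset.sum_sub_distrib]
      apply Finset.sum_congr rfl
      intro k _
      ring
    rw [h3]
    have h4 : ∀ k ∈ range ((n+1)/2 + 1),
        (Tt (m+1) k - Tt (m+1) ((k:ℤ) - 1)) *
            (RatFunc.X ^ (((n+1:ℕ):ℤ) - 2*k) * Gg m (((n+1:ℕ):ℤ) - 2*k))
          = RatFunc.X ^ (n+1) * (Tt m k * Gg m (((n+1:ℕ):ℤ) - 2*k)) := by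
      intro k hk
      rw [Tt_rec m (k:ℤ) (by positivity)]
      have hz : (RatFunc.X : RatFunc ℚ) ^ (2*(k:ℤ)) * RatFunc.X ^ (((n+1:ℕ):ℤ) - 2*k)
          = RatFunc.X ^ (n+1) := by
        rw [← zpow_add₀ RatFunc.X_ne_zero,
          show 2*(k:ℤ) + (((n+1:ℕ):ℤ) - 2*k) = ((n+1:ℕ):ℤ) by ring, zpow_natCast]
      calc RatFunc.X ^ (2*(k:ℤ)) * Tt m k *
              (RatFunc.X ^ (((n+1:ℕ):ℤ) - 2*k) * Gg m (((n+1:ℕ):ℤ) - 2*k))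
          = (RatFunc.X ^ (2*(k:ℤ)) * RatFunc.X ^ (((n+1:ℕ):ℤ) - 2*k)) *
              (Tt m k * Gg m (((n+1:ℕ):ℤ) - 2*k)) := by ring
        _ = RatFunc.X ^ (n+1) * (Tt m k * Gg m (((n+1:ℕ):ℤ) - 2*k)) := by rw [hz]
    rw [Finset.sum_congr rfl h4, ← Finset.mul_sum]
    rfl
  linear_combination key

lemma S_eq (m n : ℕ) : S m n = qbinom RatFunc.X (m+n) n := by
  induction m generalizing n with
  | zero =>
      rw [S_zero_left, Nat.zero_add, qbinom_self RatFunc.X hden_X]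
  | succ m ihm =>
      induction n with
      | zero => rw [S_zero_right, Nat.add_zero, qbinom_zero]
      | succ n ihn =>
          rw [S_step, ihn, ihm (n+1)]
          have hb : (1 : RatFunc ℚ) - RatFunc.X ^ ((n:ℤ)+1) ≠ 0 := by
            rw [show (n:ℤ)+1 = ((n+1:ℕ):ℤ) by push_cast; ring]
            exact hden_X (n+1) (by omega)
          have hp := qbinom_pascal RatFunc.X RatFunc.X_ne_zero (m+n+1) n hb
          have z : (RatFunc.X : RatFunc ℚ) ^ ((n:ℤ)+1) = RatFunc.X ^ (n+1) := by
            rw [show (n:ℤ)+1 = ((n+1:ℕ):ℤ) by push_cast; ring, zpow_natCast]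
          rw [z] at hp
          rw [show m+1+n = m+n+1 by omega, show m+(n+1) = m+n+1 by omega,
            show m+1+(n+1) = m+n+1+1 by omega]
          linear_combination -hp

end QSun

theorem q_sun_identity_new3 (m n : ℕ) :
    ∑ k ∈ range (n / 2 + 1),
      qbinom (RatFunc.X ^ 2) (m + k) k * qbinom RatFunc.X (m + 1) (n - 2 * k) *
        RatFunc.X ^ ((n - 2 * k).choose 2) =
    qbinom RatFunc.X (m + n) n := by
  have h : ∀ k ∈ range (n / 2 + 1),
      qbinom (RatFunc.X ^ 2) (m + k) k * qbinom RatFunc.X (m + 1) (n - 2 * k) *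
          RatFunc.X ^ ((n - 2 * k).choose 2)
        = QSun.Tt m k * QSun.Gg m ((n:ℤ) - 2*k) := by
    intro k hk
    have hk2 : 2 * k ≤ n := by
      have := Finset.mem_range.mp hk; omega
    have h0 : (0:ℤ) ≤ (n:ℤ) - 2*k := by omega
    have ht : ((n:ℤ) - 2*(k:ℤ)).toNat = n - 2*k := by omega
    rw [QSun.Tt_nat, QSun.Gg, if_pos h0, ht, mul_assoc]
  rw [Finset.sum_congr rfl h]
  exact QSun.S_eq m n
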